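/- Let p be an odd prime and let P be the set of polynomials of even weight in F_2[x]/(x^p - 1), i.e., the ideal generated by x - 1 (equivalently, the classes of polynomials with an even number of nonzero coefficients). If 2 is a primitive root modulo p, then P is a finite field with 2^(p-1) elements. -/

import Mathlib

open Polynomial

/-- The ring F_2[x]/(x^p - 1). -/
abbrev Rp (p : ℕ) : Type :=
  Polynomial (ZMod 2) ⧸ Ideal.span {(Polynomial.X : Polynomial (ZMod 2)) ^ p - 1}

/-- The quotient map F_2[x] → F_2[x]/(x^p - 1). -/
noncomputable def mkp (p : ℕ) : Polynomial (ZMod 2) →+* Rp p := Ideal.Quotient.mk _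

/-- The ideal P of even-weight elements of F_2[x]/(x^p-1), generated by x - 1. -/
noncomputable def evenIdeal (p : ℕ) : Ideal (Rp p) :=
  Ideal.span {mkp p (Polynomial.X - 1)}

/-- Multiplication on (the subtype of) an ideal of a commutative ring. -/
noncomputable instance idealMul {R : Type*} [CommRing R] (I : Ideal R) : Mul I :=
  ⟨fun a b => ⟨a.1 * b.1, I.mul_mem_left a.1 b.2⟩⟩

/-- If 2 is a primitive root mod the odd prime `p`, the `p`-th cyclotomic polynomial is
irreducible over `F_2`. -/
lemma cyclo_irred_of_primitive {p : ℕ} (hp : p.Prime) (hodd : Odd p)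
    (hprim : orderOf (2 : ZMod p) = p - 1) :
    Irreducible (cyclotomic p (ZMod 2)) := by
  haveI : Fact p.Prime := ⟨hp⟩
  have hp2 : p ≠ 2 := by rintro rfl; exact Nat.not_odd_iff_even.mpr even_two hodd
  have hp3 : 3 ≤ p := by have := hp.two_le; omega
  set g : (ZMod 2)[X] := cyclotomic p (ZMod 2) with hgdef
  have hgdeg : g.natDegree = p - 1 := by
    rw [hgdef, natDegree_cyclotomic, Nat.totient_prime hp]
  have hg0 : g ≠ 0 := cyclotomic_ne_zero p _
  have hgu : ¬ IsUnit g := by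
    intro h
    have := natDegree_eq_zero_of_isUnit h
    omega
  obtain ⟨q, hqirr, hqdvd⟩ := WfDvdMonoid.exists_irreducible_factor hgu hg0
  haveI : Fact (Irreducible q) := ⟨hqirr⟩
  have hq0 : q ≠ 0 := hqirr.ne_zero
  set d := q.natDegree with hd
  have hdpos : 0 < d := hqirr.natDegree_pos
  have hdle : d ≤ p - 1 := hgdeg ▸ natDegree_le_of_dvd hqdvd hg0
  letI : Fintype (AdjoinRoot q) := Module.fintypeOfFintype (AdjoinRoot.powerBasis hq0).basis
  have hcard : Fintype.card (AdjoinRoot q) = 2 ^ d := by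
    rw [Module.card_fintype (AdjoinRoot.powerBasis hq0).basis, ZMod.card, Fintype.card_fin]
    rfl
  have hne : ((p : ℕ) : AdjoinRoot q) ≠ 0 := by
    have h1 : ((p : ℕ) : ZMod 2) = 1 := by
      have hmod := Nat.odd_iff.mp hodd
      rw [← ZMod.natCast_mod, hmod, Nat.cast_one]
    have h2 : ((p : ℕ) : AdjoinRoot q) = algebraMap (ZMod 2) _ ((p : ℕ) : ZMod 2) := by
      rw [map_natCast]
    rw [h2, h1, map_one]
    exact one_ne_zero
  haveI : NeZero ((p : ℕ) : AdjoinRoot q) := ⟨hne⟩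
  have hrootg : IsRoot (g.map (AdjoinRoot.of q)) (AdjoinRoot.root q) :=
    (AdjoinRoot.isRoot_root q).dvd (Polynomial.map_dvd _ hqdvd)
  rw [hgdef, map_cyclotomic] at hrootg
  have hprimroot : IsPrimitiveRoot (AdjoinRoot.root q) p :=
    (isRoot_cyclotomic_iff).mp hrootg
  have hdvd1 : p ∣ 2 ^ d - 1 := by
    have hu0 : (AdjoinRoot.root q) ≠ 0 := by
      intro h
      have hpow := hprimroot.pow_eq_one
      rw [h, zero_pow hp.pos.ne'] at hpow
      exact zero_ne_one hpow
    have horder : orderOf (AdjoinRoot.root q) = p := (hprimroot.eq_orderOf).symm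
    have hordu : orderOf (Units.mk0 _ hu0) = p := by
      rw [← orderOf_units, Units.val_mk0, horder]
    have hdvd := orderOf_dvd_card (G := (AdjoinRoot q)ˣ) (x := Units.mk0 _ hu0)
    rw [hordu] at hdvd
    rwa [Fintype.card_units, hcard] at hdvd
  have hpow : (2 : ZMod p) ^ d = 1 := by
    have hz : ((2 ^ d - 1 : ℕ) : ZMod p) = 0 := (ZMod.natCast_eq_zero_iff _ _).mpr hdvd1
    have h2 : (1 : ℕ) ≤ 2 ^ d := Nat.one_le_pow d 2 (by norm_num)
    rw [Nat.cast_sub h2, Nat.cast_pow, Nat.cast_ofNat, Nat.cast_one, sub_eq_zero] at hz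
    exact hz
  have hdvd2 : p - 1 ∣ d := hprim ▸ orderOf_dvd_of_pow_eq_one hpow
  have hdeq : d = p - 1 := Nat.le_antisymm hdle (Nat.le_of_dvd hdpos hdvd2)
  obtain ⟨c, hc⟩ := hqdvd
  have hc0 : c ≠ 0 := by rintro rfl; rw [mul_zero] at hc; exact hg0 hc
  have hcdeg : c.natDegree = 0 := by
    have hmul := natDegree_mul hq0 hc0
    rw [← hc, hgdeg, ← hd] at hmul
    omega
  have hcu : IsUnit c := by
    rcases Polynomial.natDegree_eq_zero.mp hcdeg with ⟨a, rfl⟩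
    have ha : a ≠ 0 := by rintro rfl; simp at hc0
    exact (isUnit_C).mpr ha.isUnit
  have hassoc : Associated q g := ⟨hcu.unit, by rw [IsUnit.unit_spec, ← hc]⟩
  exact hassoc.irreducible hqirr

/-- If `p` is an odd prime and 2 is a primitive root modulo `p`, then the ideal `P`
of even-weight elements of F_2[x]/(x^p - 1) is (with its induced addition and
multiplication) a finite field with `2^(p-1)` elements. -/
theorem statement4 {p : ℕ} (hp : p.Prime) (hodd : Odd p)
    (hprim : orderOf (2 : ZMod p) = p - 1) :
    ∃ e : evenIdeal p ≃ GaloisField 2 (p - 1),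
      (∀ a b, e (a + b) = e a + e b) ∧ (∀ a b, e (a * b) = e a * e b) := by
  haveI : Fact p.Prime := ⟨hp⟩
  set g : (ZMod 2)[X] := cyclotomic p (ZMod 2) with hgdef
  have hirr : Irreducible g := cyclo_irred_of_primitive hp hodd hprim
  haveI : Fact (Irreducible g) := ⟨hirr⟩
  have hg0 : g ≠ 0 := hirr.ne_zero
  have hfac : g * (X - 1) = X ^ p - 1 := cyclotomic_prime_mul_X_sub_one (ZMod 2) p
  have hgdvd : g ∣ (X : (ZMod 2)[X]) ^ p - 1 := ⟨X - 1, hfac.symm⟩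
  have hcop : IsCoprime (X - 1 : (ZMod 2)[X]) g := by
    have h1 : (X - 1 : (ZMod 2)[X]) = X - C 1 := by rw [C_1]
    rw [h1, (irreducible_X_sub_C (1 : ZMod 2)).coprime_iff_not_dvd, dvd_iff_isRoot]
    intro hroot
    have hev : g.eval 1 = (p : ZMod 2) := eval_one_cyclotomic_prime
    rw [IsRoot.def, hev] at hroot
    have hmod := Nat.odd_iff.mp hodd
    rw [← ZMod.natCast_mod, hmod, Nat.cast_one] at hroot
    exact one_ne_zero hroot
  -- the natural map Rp p → F_2[x]/(g)
  let π : Rp p →+* AdjoinRoot g := Ideal.Quotient.lift _ (AdjoinRoot.mk g) (by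
    intro a ha
    rw [Ideal.mem_span_singleton] at ha
    rw [AdjoinRoot.mk_eq_zero]
    exact dvd_trans hgdvd ha)
  have hπmk : ∀ f : (ZMod 2)[X], π (mkp p f) = AdjoinRoot.mk g f := fun f =>
    Ideal.Quotient.lift_mk _ _ _
  have hinj : ∀ y ∈ evenIdeal p, π y = 0 → y = 0 := by
    intro y hy hπy
    rw [evenIdeal, Ideal.mem_span_singleton'] at hy
    obtain ⟨t, ht⟩ := hy
    obtain ⟨s, rfl⟩ := Ideal.Quotient.mk_surjective t
    have hy' : y = mkp p (s * (X - 1)) := by rw [← ht, map_mul]; rfl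
    have h1 : g ∣ s * (X - 1) := by
      rw [hy', hπmk, AdjoinRoot.mk_eq_zero] at hπy
      exact hπy
    have h2 : (X - 1 : (ZMod 2)[X]) ∣ s * (X - 1) := dvd_mul_left _ _
    have h3 : (X - 1) * g ∣ s * (X - 1) := hcop.mul_dvd h2 h1
    rw [hy']
    rw [show mkp p (s * (X - 1)) = Ideal.Quotient.mk _ (s * (X - 1)) from rfl,
      Ideal.Quotient.eq_zero_iff_mem, Ideal.mem_span_singleton, ← hfac, mul_comm g (X - 1)]
    exact h3
  have hsurj : ∀ z : AdjoinRoot g, ∃ y ∈ evenIdeal p, π y = z := by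
    intro z
    obtain ⟨h0, rfl⟩ := AdjoinRoot.mk_surjective z
    obtain ⟨u, v, huv⟩ := hcop
    refine ⟨mkp p (h0 * (u * (X - 1))), ?_, ?_⟩
    · rw [evenIdeal, Ideal.mem_span_singleton']
      exact ⟨mkp p (h0 * u), by rw [← map_mul, mul_assoc]⟩
    · rw [hπmk, AdjoinRoot.mk_eq_mk]
      refine ⟨-(h0 * v), ?_⟩
      linear_combination h0 * huv
  let φ : evenIdeal p → AdjoinRoot g := fun y => π y.1
  have hφbij : Function.Bijective φ := by
    constructor
    · intro a b hab
      apply Subtype.ext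
      have hab' : π a.1 = π b.1 := hab
      have hsub : π (a.1 - b.1) = 0 := by
        rw [map_sub, hab', sub_self]
      have := hinj _ (Submodule.sub_mem _ a.2 b.2) hsub
      exact sub_eq_zero.mp this
    · intro z
      obtain ⟨y, hy, hz⟩ := hsurj z
      exact ⟨⟨y, hy⟩, hz⟩
  have hgdeg : g.natDegree = p - 1 := by
    rw [hgdef, natDegree_cyclotomic, Nat.totient_prime hp]
  letI : Fintype (AdjoinRoot g) := Module.fintypeOfFintype (AdjoinRoot.powerBasis hg0).basis
  have hcard : Fintype.card (AdjoinRoot g) = 2 ^ (p - 1) := by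
    rw [Module.card_fintype (AdjoinRoot.powerBasis hg0).basis, ZMod.card, Fintype.card_fin]
    congr 1
  let e2 : AdjoinRoot g ≃ₐ[ZMod 2] GaloisField 2 (p - 1) :=
    GaloisField.algEquivGaloisFieldOfFintype 2 (p - 1) hcard
  refine ⟨(Equiv.ofBijective φ hφbij).trans e2.toEquiv, ?_, ?_⟩
  · intro a b
    show e2 (φ (a + b)) = e2 (φ a) + e2 (φ b)
    have hadd : φ (a + b) = φ a + φ b := by
      show π ((a : Rp p) + b) = π a.1 + π b.1
      rw [map_add]
    rw [hadd, map_add]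
  · intro a b
    show e2 (φ (a * b)) = e2 (φ a) * e2 (φ b)
    have hmul : φ (a * b) = φ a * φ b := by
      show π ((a : Rp p) * b) = π a.1 * π b.1
      rw [map_mul]
    rw [hmul, map_mul]
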